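/- Let K ≥ 1 and let I : (0,∞)^K → (0,∞)^K be a standard interference function, i.e. it satisfies monotonicity (p ≥ p' componentwise implies I(p) ≥ I(p') componentwise) and scalability (for every μ > 1 and every p, μ·I(p) > I(μ·p) componentwise). Then I has at most one fixed point in (0,∞)^K. -/
import Mathlib


/-- Let `K ≥ 1` and let `I : (0,∞)^K → (0,∞)^K` be a standard interference
function (Yates): positive, monotone (componentwise `p' ≤ p` implies `I p' ≤ I p`), and
scalable (for every `μ > 1`, `I (μ • p) < μ • I p` componentwise).  Then `I` has at most
one fixed point with all components positive. -/
theorem standard_interference_function_unique_fixed_point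
    (K : ℕ) (hK : 1 ≤ K)
    (I : (Fin K → ℝ) → (Fin K → ℝ))
    (hpos : ∀ p : Fin K → ℝ, (∀ k, 0 < p k) → ∀ k, 0 < I p k)
    (hmono : ∀ p p' : Fin K → ℝ, (∀ k, 0 < p' k) → (∀ k, 0 < p k) →
      (∀ k, p' k ≤ p k) → ∀ k, I p' k ≤ I p k)
    (hscal : ∀ μ : ℝ, 1 < μ → ∀ p : Fin K → ℝ, (∀ k, 0 < p k) →
      ∀ k, I (fun j => μ * p j) k < μ * I p k) :
    ∀ p q : Fin K → ℝ, (∀ k, 0 < p k) → (∀ k, 0 < q k) →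
      I p = p → I q = q → p = q := by
  haveI : Nonempty (Fin K) := ⟨⟨0, hK⟩⟩
  have key : ∀ p q : Fin K → ℝ, (∀ k, 0 < p k) → (∀ k, 0 < q k) →
      I p = p → I q = q → ∀ k, q k ≤ p k := by
    intro p q hp hq hfp hfq
    have hne : (Finset.univ : Finset (Fin K)).Nonempty := Finset.univ_nonempty
    set μ : ℝ := Finset.univ.sup' hne (fun k => q k / p k) with hμdef
    have hle : ∀ k, q k / p k ≤ μ := by
      intro k; rw [hμdef]; exact Finset.le_sup' (fun k => q k / p k) (Finset.mem_univ k)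
    have hqle : ∀ k, q k ≤ μ * p k := fun k => by
      have := hle k
      rw [div_le_iff₀ (hp k)] at this
      linarith [this]
    obtain ⟨k0, -, hk0⟩ := Finset.exists_mem_eq_sup' hne (fun k => q k / p k)
    have hμpos : 0 < μ := lt_of_lt_of_le (div_pos (hq k0) (hp k0)) (le_of_eq hk0.symm)
    have hμeq : μ * p k0 = q k0 := by
      rw [hμdef, hk0, div_mul_cancel₀ _ (hp k0).ne']
    have hμle1 : μ ≤ 1 := by
      by_contra h
      push_neg at h
      have hmp : ∀ j, 0 < μ * p j := fun j => mul_pos hμpos (hp j)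
      have h1 : I q k0 ≤ I (fun j => μ * p j) k0 :=
        hmono (fun j => μ * p j) q hq hmp hqle k0
      have h2 : I (fun j => μ * p j) k0 < μ * I p k0 := hscal μ h p hp k0
      rw [hfq] at h1
      rw [hfp] at h2
      rw [hμeq] at h2
      linarith
    intro k
    calc q k ≤ μ * p k := hqle k
      _ ≤ 1 * p k := by nlinarith [hp k]
      _ = p k := one_mul _
  intro p q hp hq hfp hfq
  funext k
  exact le_antisymm (key q p hq hp hfq hfp k) (key p q hp hq hfp hfq k)
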